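/- arXiv:2206.10444 — 2 statements merged into one kernel-verified Lean document; each statement's English description precedes it below -/
import Mathlib

section
/- Let A ∈ ℝ^{n×n} with A + Aᵀ positive definite, ‖A‖₂ = ‖U‖₂ = 1, P_α = (1/(2α))(A + αI)(αI + γUUᵀ). If (λ, x) is a real eigenpair of P_α^{-1}(A + γUUᵀ) with ‖x‖₂ = 1, then λ ∈ [μ, 2) where μ = α·λ_min(A + Aᵀ)/((1 + α)(α + γ)). -/
open Matrix

noncomputable def en {n : ℕ} (v : Fin n → ℝ) : ℝ := Real.sqrt (v ⬝ᵥ v)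

lemma dps_nonneg {n : ℕ} (v : Fin n → ℝ) : 0 ≤ v ⬝ᵥ v := by
  simpa [dotProduct, mul_self_nonneg] using Finset.sum_nonneg fun i _ => mul_self_nonneg (v i)

lemma en_eq {n : ℕ} (v : Fin n → ℝ) : en v = ‖(WithLp.equiv 2 (Fin n → ℝ)).symm v‖ := by
  rw [EuclideanSpace.norm_eq, en]
  congr 1
  simp [dotProduct, Real.norm_eq_abs, sq_abs, sq]

lemma en_nonneg {n : ℕ} (v : Fin n → ℝ) : 0 ≤ en v := Real.sqrt_nonneg _

lemma en_sq {n : ℕ} (v : Fin n → ℝ) : en v ^ 2 = v ⬝ᵥ v := Real.sq_sqrt (dps_nonneg v)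

/-- The spectral (operator 2-) norm of a real (possibly rectangular) matrix. -/
noncomputable def spec2Norm {m n : ℕ} (M : Matrix (Fin m) (Fin n) ℝ) : ℝ :=
  ‖LinearMap.toContinuousLinearMap (Matrix.toEuclideanLin M)‖

lemma en_mulVec_le {m n : ℕ} (M : Matrix (Fin m) (Fin n) ℝ) (v : Fin n → ℝ) :
    en (M *ᵥ v) ≤ spec2Norm M * en v := by
  rw [en_eq, en_eq]
  have := (LinearMap.toContinuousLinearMap (Matrix.toEuclideanLin M)).le_opNorm
    ((WithLp.equiv 2 (Fin n → ℝ)).symm v)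
  simpa [spec2Norm, Matrix.toEuclideanLin_apply] using this

lemma en_cs {n : ℕ} (u v : Fin n → ℝ) : u ⬝ᵥ v ≤ en u * en v := by
  rw [en_eq, en_eq]
  have := real_inner_le_norm ((WithLp.equiv 2 (Fin n → ℝ)).symm u)
    ((WithLp.equiv 2 (Fin n → ℝ)).symm v)
  have h2 : inner ℝ ((WithLp.equiv 2 (Fin n → ℝ)).symm u) ((WithLp.equiv 2 (Fin n → ℝ)).symm v)
      = u ⬝ᵥ v := by
    simp [PiLp.inner_apply, dotProduct, RCLike.inner_apply, mul_comm]
  rw [h2] at this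
  exact this

lemma en_add_le {n : ℕ} (u v : Fin n → ℝ) : en (u + v) ≤ en u + en v := by
  rw [en_eq, en_eq, en_eq]
  exact norm_add_le _ _

lemma en_smul {n : ℕ} (c : ℝ) (v : Fin n → ℝ) : en (c • v) = |c| * en v := by
  rw [en_eq, en_eq]
  simpa using norm_smul c ((WithLp.equiv 2 (Fin n → ℝ)).symm v)

lemma rayleigh_lower {n : ℕ} [NeZero n] (T : Matrix (Fin n) (Fin n) ℝ) (hT : T.IsHermitian)
    (x : Fin n → ℝ) :
    (⨅ i, hT.eigenvalues i) * (x ⬝ᵥ x) ≤ x ⬝ᵥ (T *ᵥ x) := by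
  classical
  set v : EuclideanSpace ℝ (Fin n) := (WithLp.equiv 2 (Fin n → ℝ)).symm x with hv
  set b := hT.eigenvectorBasis with hb
  set c : Fin n → ℝ := fun i => b.repr v i with hc
  have hsym : (Matrix.toEuclideanLin T).IsSymmetric :=
    Matrix.isHermitian_iff_isSymmetric.mp hT
  have hinner : ∀ w u : EuclideanSpace ℝ (Fin n),
      (inner ℝ w u : ℝ) = ∑ i, b.repr w i * b.repr u i := by
    intro w u
    have h := b.repr.inner_map_map w u
    rw [← h, PiLp.inner_apply]
    simp [RCLike.inner_apply, mul_comm]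
  have hLb : ∀ i, Matrix.toEuclideanLin T (b i) = hT.eigenvalues i • b i := by
    intro i
    have := hT.mulVec_eigenvectorBasis i
    ext j
    have h1 : (Matrix.toEuclideanLin T (b i)) j = (T *ᵥ ⇑(b i)) j := rfl
    rw [h1, this]
    rfl
  have hreprL : ∀ i, b.repr (Matrix.toEuclideanLin T v) i = hT.eigenvalues i * c i := by
    intro i
    rw [show b.repr (Matrix.toEuclideanLin T v) i = inner ℝ (b i) (Matrix.toEuclideanLin T v) from
      b.repr_apply_apply _ i, ← hsym (b i) v, hLb i]
    rw [inner_smul_left]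
    simp [hc, b.repr_apply_apply, RCLike.conj_to_real]
  have key : x ⬝ᵥ (T *ᵥ x) = ∑ i, hT.eigenvalues i * c i ^ 2 := by
    have h1 : (inner ℝ v (Matrix.toEuclideanLin T v) : ℝ) = x ⬝ᵥ (T *ᵥ x) := by
      simp [PiLp.inner_apply, RCLike.inner_apply, dotProduct, hv, Matrix.toEuclideanLin_apply, mul_comm]
    rw [← h1, hinner]
    refine Finset.sum_congr rfl fun i _ => ?_
    rw [hreprL i]; ring
  have hxx : x ⬝ᵥ x = ∑ i, c i ^ 2 := by
    have h1 : (inner ℝ v v : ℝ) = x ⬝ᵥ x := by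
      rw [hv, real_inner_self_eq_norm_sq, ← en_eq, en_sq]
    rw [← h1, hinner]
    exact Finset.sum_congr rfl fun i _ => by rw [sq]
  rw [key, hxx, Finset.mul_sum]
  refine Finset.sum_le_sum fun i _ => ?_
  have hle : (⨅ j, hT.eigenvalues j) ≤ hT.eigenvalues i :=
    ciInf_le (Set.finite_range _).bddBelow i
  exact mul_le_mul_of_nonneg_right hle (sq_nonneg _)

set_option maxHeartbeats 1000000 in
theorem stmt_10 {n k : ℕ} [NeZero n] (A : Matrix (Fin n) (Fin n) ℝ)
    (U : Matrix (Fin n) (Fin k) ℝ) (hA : (A + Aᵀ).PosDef)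
    (hnA : spec2Norm A = 1) (hnU : spec2Norm U = 1)
    (α γ : ℝ) (hα : 0 < α) (hγ : 0 < γ)
    (Pα : Matrix (Fin n) (Fin n) ℝ)
    (hP : Pα = (1 / (2 * α)) • ((A + α • 1) * (α • 1 + γ • (U * Uᵀ))))
    (lam : ℝ) (x : Fin n → ℝ) (hx : x ⬝ᵥ x = 1)
    (heig : (Pα⁻¹ * (A + γ • (U * Uᵀ))) *ᵥ x = lam • x) :
    α * (⨅ i, hA.1.eigenvalues i) / ((1 + α) * (α + γ)) ≤ lam ∧ lam < 2 := by
  classical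
  set C : Matrix (Fin n) (Fin n) ℝ := U * Uᵀ with hCdef
  have hxne : x ≠ 0 := by
    intro h; rw [h] at hx; simp at hx
  -- quadratic form facts
  have hCq : ∀ v : Fin n → ℝ, v ⬝ᵥ (C *ᵥ v) = (Uᵀ *ᵥ v) ⬝ᵥ (Uᵀ *ᵥ v) := by
    intro v
    rw [hCdef, ← Matrix.mulVec_mulVec, Matrix.dotProduct_mulVec, ← Matrix.mulVec_transpose]
  have hCq0 : ∀ v : Fin n → ℝ, 0 ≤ v ⬝ᵥ (C *ᵥ v) := fun v => (hCq v) ▸ dps_nonneg _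
  have hAq : ∀ v : Fin n → ℝ, v ≠ 0 → 0 < v ⬝ᵥ (A *ᵥ v) := by
    intro v hv
    have := hA.dotProduct_mulVec_pos hv
    have hAT : v ⬝ᵥ (Aᵀ *ᵥ v) = v ⬝ᵥ (A *ᵥ v) := by
      rw [Matrix.mulVec_transpose, dotProduct_comm, ← Matrix.dotProduct_mulVec]
    simp only [Matrix.add_mulVec, dotProduct_add, RCLike.re_to_real, star_trivial,
      hAT] at this
    linarith
  -- positivity of the symmetric parts
  have hq1 : ∀ v : Fin n → ℝ, v ≠ 0 → 0 < v ⬝ᵥ ((α • 1 + A) *ᵥ v) := by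
    intro v hv
    have h0 : 0 < v ⬝ᵥ v := lt_of_le_of_ne (dps_nonneg v) fun h =>
      hv ((dotProduct_self_eq_zero).mp h.symm)
    have := hAq v hv
    simp only [Matrix.add_mulVec, Matrix.smul_mulVec, Matrix.one_mulVec,
      dotProduct_add, dotProduct_smul, smul_eq_mul]
    nlinarith
  have hq2 : ∀ v : Fin n → ℝ, v ≠ 0 → 0 < v ⬝ᵥ ((α • 1 + γ • C) *ᵥ v) := by
    intro v hv
    have h0 : 0 < v ⬝ᵥ v := lt_of_le_of_ne (dps_nonneg v) fun h =>
      hv ((dotProduct_self_eq_zero).mp h.symm)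
    have := hCq0 v
    simp only [Matrix.add_mulVec, Matrix.smul_mulVec, Matrix.one_mulVec,
      dotProduct_add, dotProduct_smul, smul_eq_mul]
    nlinarith
  -- invertibility
  have hdet_of_pos : ∀ M : Matrix (Fin n) (Fin n) ℝ,
      (∀ v : Fin n → ℝ, v ≠ 0 → 0 < v ⬝ᵥ (M *ᵥ v)) → IsUnit M.det := by
    intro M hM
    rw [isUnit_iff_ne_zero]
    intro hd
    obtain ⟨v, hv, hMv⟩ := (Matrix.exists_mulVec_eq_zero_iff).mpr hd
    have := hM v hv
    rw [hMv] at this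
    simp at this
  have hdetA1 : IsUnit (α • 1 + A).det := hdet_of_pos _ hq1
  have hdetA1' : IsUnit (A + α • (1 : Matrix (Fin n) (Fin n) ℝ)).det := by
    rwa [add_comm] at hdetA1
  have hdetC1 : IsUnit (α • 1 + γ • C).det := hdet_of_pos _ hq2
  have hdetP : IsUnit Pα.det := by
    rw [hP, Matrix.det_smul, Matrix.det_mul]
    refine (IsUnit.mul ?_ (hdetA1'.mul hdetC1))
    rw [isUnit_iff_ne_zero]
    positivity
  -- B x = lam • Pα x
  have hB : (A + γ • C) *ᵥ x = lam • (Pα *ᵥ x) := by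
    have h1 := congrArg (fun v => Pα *ᵥ v) heig
    rw [Matrix.mulVec_mulVec, ← Matrix.mul_assoc, Matrix.mul_nonsing_inv _ hdetP,
      Matrix.one_mul, Matrix.mulVec_smul] at h1
    exact h1
  -- matrix identities
  have hfact1 : (α • 1 + A) * (α • 1 + γ • C) = (2*α) • Pα := by
    have h2a : (2*α) * (1/(2*α)) = 1 := by field_simp
    rw [hP, smul_smul, h2a, one_smul, add_comm (α • 1) A]
  have hfact2 : (α • 1 - A) * (α • 1 - γ • C)
      = (α • 1 + A) * (α • 1 + γ • C) - ((2*α) • A + (2*α*γ) • C) := by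
    simp only [sub_mul, mul_sub, add_mul, mul_add, smul_mul_assoc, mul_smul_comm, smul_smul,
      one_mul, mul_one, smul_add, smul_sub]
    module
  set ν : ℝ := 1 - lam with hν
  set u : Fin n → ℝ := (α • 1 - γ • C) *ᵥ x with hu
  set w : Fin n → ℝ := (α • 1 + γ • C) *ᵥ x with hwdef
  have hkey : (α • 1 - A) *ᵥ u = ν • ((α • 1 + A) *ᵥ w) := by
    have hBC : ((2*α) • A + (2*α*γ) • C) *ᵥ x = (2*α) • ((A + γ • C) *ᵥ x) := by
      simp only [Matrix.add_mulVec, Matrix.smul_mulVec, smul_add, smul_smul]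
      try module
    rw [hu, Matrix.mulVec_mulVec, hfact2, Matrix.sub_mulVec, hBC, hB,
      hwdef, Matrix.mulVec_mulVec, hfact1]
    simp only [Matrix.smul_mulVec, smul_smul]
    rw [hν]
    module
  -- pass to z
  have hcommAB : (α • 1 - A) * (α • 1 + A)⁻¹ = (α • 1 + A)⁻¹ * (α • 1 - A) := by
    have hc : (α • 1 - A) * (α • 1 + A) = (α • 1 + A) * (α • 1 - A) := by
      simp only [sub_mul, mul_sub, add_mul, mul_add, smul_mul_assoc, mul_smul_comm,
        one_mul, mul_one]
      module
    calc (α • 1 - A) * (α • 1 + A)⁻¹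
        = (α • 1 + A)⁻¹ * ((α • 1 + A) * ((α • 1 - A) * (α • 1 + A)⁻¹)) := by
          rw [← Matrix.mul_assoc, ← Matrix.mul_assoc, Matrix.nonsing_inv_mul _ hdetA1,
            Matrix.one_mul]
      _ = (α • 1 + A)⁻¹ * (α • 1 - A) := by
          rw [← Matrix.mul_assoc ((α•1+A)) _ _, hc.symm, Matrix.mul_assoc,
            Matrix.mul_nonsing_inv _ hdetA1, Matrix.mul_one]
  set z : Fin n → ℝ := (α • 1 + A)⁻¹ *ᵥ u with hz
  have huz : (α • 1 + A) *ᵥ z = u := by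
    rw [hz, Matrix.mulVec_mulVec, Matrix.mul_nonsing_inv _ hdetA1, Matrix.one_mulVec]
  have hwz : ν • w = (α • 1 - A) *ᵥ z := by
    have e1 : (α • 1 + A)⁻¹ *ᵥ ((α • 1 - A) *ᵥ u) = (α • 1 - A) *ᵥ z :=
      calc (α • 1 + A)⁻¹ *ᵥ ((α • 1 - A) *ᵥ u)
          = ((α • 1 + A)⁻¹ * (α • 1 - A)) *ᵥ u := Matrix.mulVec_mulVec u _ _
        _ = ((α • 1 - A) * (α • 1 + A)⁻¹) *ᵥ u := by rw [hcommAB]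
        _ = (α • 1 - A) *ᵥ ((α • 1 + A)⁻¹ *ᵥ u) := (Matrix.mulVec_mulVec u _ _).symm
        _ = (α • 1 - A) *ᵥ z := rfl
    have e2 : (α • 1 + A)⁻¹ *ᵥ ((α • 1 + A) *ᵥ w) = w :=
      calc (α • 1 + A)⁻¹ *ᵥ ((α • 1 + A) *ᵥ w)
          = ((α • 1 + A)⁻¹ * (α • 1 + A)) *ᵥ w := Matrix.mulVec_mulVec w _ _
        _ = w := by rw [Matrix.nonsing_inv_mul _ hdetA1, Matrix.one_mulVec]
    calc ν • w = ν • ((α • 1 + A)⁻¹ *ᵥ ((α • 1 + A) *ᵥ w)) := by rw [e2]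
      _ = (α • 1 + A)⁻¹ *ᵥ (ν • ((α • 1 + A) *ᵥ w)) := (Matrix.mulVec_smul _ _ _).symm
      _ = (α • 1 + A)⁻¹ *ᵥ ((α • 1 - A) *ᵥ u) := by rw [← hkey]
      _ = (α • 1 - A) *ᵥ z := e1
  -- quadratic identities
  have q1 : ∀ v : Fin n → ℝ,
      ((α • 1 + A) *ᵥ v) ⬝ᵥ ((α • 1 + A) *ᵥ v) - ((α • 1 - A) *ᵥ v) ⬝ᵥ ((α • 1 - A) *ᵥ v)
        = 4*α*(v ⬝ᵥ (A *ᵥ v)) := by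
    intro v
    have e1 : (A *ᵥ v) ⬝ᵥ v = v ⬝ᵥ (A *ᵥ v) := dotProduct_comm _ _
    simp only [Matrix.add_mulVec, Matrix.sub_mulVec, Matrix.smul_mulVec,
      Matrix.one_mulVec, dotProduct_add, add_dotProduct,
      dotProduct_sub, sub_dotProduct, dotProduct_smul,
      smul_dotProduct, smul_eq_mul, e1]
    ring
  have q2 : w ⬝ᵥ w - u ⬝ᵥ u = 4*α*γ*(x ⬝ᵥ (C *ᵥ x)) := by
    have e1 : (C *ᵥ x) ⬝ᵥ x = x ⬝ᵥ (C *ᵥ x) := dotProduct_comm _ _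
    rw [hwdef, hu]
    simp only [Matrix.add_mulVec, Matrix.sub_mulVec, Matrix.smul_mulVec,
      Matrix.one_mulVec, dotProduct_add, add_dotProduct,
      dotProduct_sub, sub_dotProduct, dotProduct_smul,
      smul_dotProduct, smul_eq_mul, e1]
    ring
  -- w ≠ 0
  have hwpos : 0 < w ⬝ᵥ w := by
    have h1 : 0 < x ⬝ᵥ w := hq2 x hxne
    have hwne : w ≠ 0 := by
      intro h; rw [h] at h1; simp at h1
    exact lt_of_le_of_ne (dps_nonneg w) fun h =>
      hwne ((dotProduct_self_eq_zero).mp h.symm)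
  have hle_uw : u ⬝ᵥ u ≤ w ⬝ᵥ w := by
    have h9 : 0 ≤ 4*α*γ*(x ⬝ᵥ (C *ᵥ x)) := mul_nonneg (by positivity) (hCq0 x)
    linarith [q2]
  -- ν² < 1
  have hnusq : ν^2 < 1 := by
    have hmain : ν^2 * (w ⬝ᵥ w) < w ⬝ᵥ w := by
      by_cases hu0 : u = 0
      · have hz0 : z = 0 := by rw [hz, hu0, Matrix.mulVec_zero]
        have : ν • w = 0 := by rw [hwz, hz0, Matrix.mulVec_zero]
        rcases smul_eq_zero.mp this with h | h
        · rw [h]; simpa using hwpos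
        · exact absurd h (by intro hh; rw [hh] at hwpos; simp at hwpos)
      · have hzne : z ≠ 0 := by
          intro h; apply hu0; rw [← huz, h, Matrix.mulVec_zero]
        have hzA := hAq z hzne
        have h1 : (ν • w) ⬝ᵥ (ν • w) = ν^2 * (w ⬝ᵥ w) := by
          simp [smul_dotProduct, dotProduct_smul, smul_eq_mul]; ring
        have h2 : ((α • 1 + A) *ᵥ z) ⬝ᵥ ((α • 1 + A) *ᵥ z) = u ⬝ᵥ u := by rw [huz]
        have h3 := q1 z
        have h4 : (ν • w) ⬝ᵥ (ν • w) = ((α • 1 - A) *ᵥ z) ⬝ᵥ ((α • 1 - A) *ᵥ z) := by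
          rw [hwz]
        nlinarith
    nlinarith
  have hlam2 : lam < 2 := by nlinarith [hnusq]
  have hlam0 : 0 < lam := by nlinarith [hnusq]
  refine ⟨?_, hlam2⟩
  -- lower bound
  have hdot : x ⬝ᵥ ((A + γ • C) *ᵥ x) = lam * (x ⬝ᵥ (Pα *ᵥ x)) := by
    rw [hB, dotProduct_smul, smul_eq_mul]
  -- Rayleigh : lmin ≤ 2 x⬝Ax
  set lmin : ℝ := ⨅ i, hA.1.eigenvalues i with hlmin
  have hray : lmin ≤ 2 * (x ⬝ᵥ (A *ᵥ x)) := by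
    have := rayleigh_lower (A + Aᵀ) hA.1 x
    rw [hx, mul_one] at this
    have hAT : x ⬝ᵥ (Aᵀ *ᵥ x) = x ⬝ᵥ (A *ᵥ x) := by
      rw [Matrix.mulVec_transpose, dotProduct_comm, ← Matrix.dotProduct_mulVec]
    simp only [Matrix.add_mulVec, dotProduct_add, hAT] at this
    linarith
  -- norm bounds
  have henx : en x = 1 := by rw [en, hx, Real.sqrt_one]
  have hens : en (Uᵀ *ᵥ x) ≤ 1 := by
    set s := Uᵀ *ᵥ x with hs
    have h1 : en s ^ 2 = x ⬝ᵥ (C *ᵥ x) := by rw [en_sq, hCq]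
    have h2 : x ⬝ᵥ (C *ᵥ x) = x ⬝ᵥ (U *ᵥ s) := by
      rw [hCdef, ← Matrix.mulVec_mulVec]
    have h3 : x ⬝ᵥ (U *ᵥ s) ≤ en x * en (U *ᵥ s) := en_cs _ _
    have h4 : en (U *ᵥ s) ≤ spec2Norm U * en s := en_mulVec_le _ _
    rw [hnU, one_mul] at h4
    have h5 : en s ^ 2 ≤ en s := by
      rw [h1, h2]
      calc x ⬝ᵥ (U *ᵥ s) ≤ en x * en (U *ᵥ s) := h3
        _ = en (U *ᵥ s) := by rw [henx, one_mul]
        _ ≤ en s := h4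
    nlinarith [en_nonneg s]
  have henC : en (C *ᵥ x) ≤ 1 := by
    have h1 : C *ᵥ x = U *ᵥ (Uᵀ *ᵥ x) := by rw [hCdef, ← Matrix.mulVec_mulVec]
    rw [h1]
    calc en (U *ᵥ (Uᵀ *ᵥ x)) ≤ spec2Norm U * en (Uᵀ *ᵥ x) := en_mulVec_le _ _
      _ = en (Uᵀ *ᵥ x) := by rw [hnU, one_mul]
      _ ≤ 1 := hens
  have henw : en w ≤ α + γ := by
    have h1 : w = α • x + γ • (C *ᵥ x) := by
      rw [hwdef]
      simp [Matrix.add_mulVec, Matrix.smul_mulVec, Matrix.one_mulVec]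
    rw [h1]
    calc en (α • x + γ • (C *ᵥ x)) ≤ en (α • x) + en (γ • (C *ᵥ x)) := en_add_le _ _
      _ = |α| * en x + |γ| * en (C *ᵥ x) := by rw [en_smul, en_smul]
      _ = α * en x + γ * en (C *ᵥ x) := by
          rw [abs_of_pos hα, abs_of_pos hγ]
      _ ≤ α * 1 + γ * 1 := by
          rw [henx]
          have := henC
          have := en_nonneg (C *ᵥ x)
          nlinarith
      _ = α + γ := by ring
  have hPle : x ⬝ᵥ (Pα *ᵥ x) ≤ (1+α)*(α+γ)/(2*α) := by
    have hPx : Pα *ᵥ x = (1/(2*α)) • ((A + α • 1) *ᵥ w) := by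
      rw [hP, Matrix.smul_mulVec, ← Matrix.mulVec_mulVec, ← hwdef]
    have h2 : x ⬝ᵥ ((A + α • 1) *ᵥ w) ≤ (1+α)*(α+γ) := by
      have hcs : x ⬝ᵥ ((A + α • 1) *ᵥ w) ≤ en x * en ((A + α • 1) *ᵥ w) := en_cs _ _
      have hAw : en ((A + α • 1) *ᵥ w) ≤ (1+α) * en w := by
        have h3 : (A + α • 1) *ᵥ w = A *ᵥ w + α • w := by
          simp [Matrix.add_mulVec, Matrix.smul_mulVec, Matrix.one_mulVec]
        rw [h3]
        calc en (A *ᵥ w + α • w) ≤ en (A *ᵥ w) + en (α • w) := en_add_le _ _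
          _ ≤ spec2Norm A * en w + |α| * en w := by
              gcongr
              · exact en_mulVec_le _ _
              · rw [en_smul]
          _ = (1+α) * en w := by rw [hnA, abs_of_pos hα]; ring
      calc x ⬝ᵥ ((A + α • 1) *ᵥ w) ≤ en x * en ((A + α • 1) *ᵥ w) := hcs
        _ = en ((A + α • 1) *ᵥ w) := by rw [henx, one_mul]
        _ ≤ (1+α) * en w := hAw
        _ ≤ (1+α) * (α+γ) := by
            have : (0:ℝ) ≤ 1 + α := by linarith
            exact mul_le_mul_of_nonneg_left henw this
    rw [hPx, dotProduct_smul, smul_eq_mul]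
    have h3 : (1/(2*α)) * (x ⬝ᵥ ((A + α • 1) *ᵥ w)) ≤ (1/(2*α)) * ((1+α)*(α+γ)) :=
      mul_le_mul_of_nonneg_left h2 (by positivity)
    have h4 : (1/(2*α)) * ((1+α)*(α+γ)) = (1+α)*(α+γ)/(2*α) := by ring
    linarith
  -- combine
  have hBge : lmin / 2 ≤ x ⬝ᵥ ((A + γ • C) *ᵥ x) := by
    have h1 : x ⬝ᵥ ((A + γ • C) *ᵥ x) = x ⬝ᵥ (A *ᵥ x) + γ * (x ⬝ᵥ (C *ᵥ x)) := by
      simp [Matrix.add_mulVec, Matrix.smul_mulVec, dotProduct_add,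
        dotProduct_smul, smul_eq_mul]
    rw [h1]
    have := hCq0 x
    nlinarith
  rw [hdot] at hBge
  rw [div_le_iff₀ (by positivity : (0:ℝ) < (1+α)*(α+γ))]
  have h6 : lam * (x ⬝ᵥ (Pα *ᵥ x)) ≤ lam * ((1+α)*(α+γ)/(2*α)) :=
    mul_le_mul_of_nonneg_left hPle (le_of_lt hlam0)
  have h7 : lmin / 2 ≤ lam * ((1+α)*(α+γ)/(2*α)) := le_trans hBge h6
  rw [div_le_iff₀ (by positivity : (0:ℝ) < 2)] at h7
  have h8 : lam * ((1+α)*(α+γ)/(2*α)) * 2 = lam * ((1+α)*(α+γ)) / α := by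
    field_simp
  rw [h8] at h7
  calc α * lmin = α * lmin := rfl
    _ ≤ α * (lam * ((1+α)*(α+γ)) / α) := by
        exact mul_le_mul_of_nonneg_left h7 (le_of_lt hα)
    _ = lam * ((1+α)*(α+γ)) := by field_simp
end

section
/- Under the assumptions ‖A‖₂ = ‖U‖₂ = 1 and A + Aᵀ positive definite, if (η, x) is an eigenpair of A with x ∈ Ker(Uᵀ), then x is an eigenvector of P_α^{-1}(A + γUUᵀ) with eigenvalue λ = 2η/(η + α), independent of γ. -/
open Matrix

theorem stmt_11 {n k : ℕ} (A : Matrix (Fin n) (Fin n) ℝ)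
    (U : Matrix (Fin n) (Fin k) ℝ) (hA : (A + Aᵀ).PosDef)
    (hnA : spec2Norm A = 1) (hnU : spec2Norm U = 1)
    (α γ : ℝ) (hα : 0 < α) (hγ : 0 < γ)
    (Pα : Matrix (Fin n) (Fin n) ℝ)
    (hP : Pα = (1 / (2 * α)) • ((A + α • 1) * (α • 1 + γ • (U * Uᵀ))))
    (η : ℝ) (x : Fin n → ℝ) (hx : x ≠ 0) (heig : A *ᵥ x = η • x)
    (hker : Uᵀ *ᵥ x = 0) :
    (Pα⁻¹ * (A + γ • (U * Uᵀ))) *ᵥ x = (2 * η / (η + α)) • x := by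
  have hUUx : (U * Uᵀ) *ᵥ x = 0 := by
    rw [← mulVec_mulVec, hker, mulVec_zero]
  have hBx : (A + γ • (U * Uᵀ)) *ᵥ x = η • x := by
    rw [add_mulVec, smul_mulVec, hUUx, smul_zero, add_zero, heig]
  have hdp : ∀ v : Fin n → ℝ, v ≠ 0 → 0 < v ⬝ᵥ v := by
    intro v hv
    have h := (dotProduct_self_eq_zero (v := v)).not.mpr hv
    have hnn : 0 ≤ v ⬝ᵥ v := Finset.sum_nonneg fun i _ => mul_self_nonneg (v i)
    exact lt_of_le_of_ne hnn (Ne.symm h)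
  -- symmetrized quadratic form
  have hquad : ∀ v : Fin n → ℝ, v ⬝ᵥ ((A + Aᵀ) *ᵥ v) = 2 * (v ⬝ᵥ (A *ᵥ v)) := by
    intro v
    rw [add_mulVec, dotProduct_add, dotProduct_mulVec (A := Aᵀ), vecMul_transpose,
      dotProduct_comm]
    ring
  have hη : 0 < η := by
    have h1 := hA.dotProduct_mulVec_pos hx
    rw [star_trivial, hquad, heig, dotProduct_smul, smul_eq_mul] at h1
    have := hdp x hx
    nlinarith
  have hηα : 0 < η + α := by linarith
  -- Pα *ᵥ x = ((η+α)/2) • x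
  have hfac2 : (α • 1 + γ • (U * Uᵀ)) *ᵥ x = α • x := by
    rw [add_mulVec, smul_mulVec, smul_mulVec, hUUx, smul_zero, add_zero,
      one_mulVec]
  have hfac1 : ∀ (v : Fin n → ℝ), A *ᵥ v = η • v → (A + α • 1) *ᵥ v = (η + α) • v := by
    intro v hv
    rw [add_mulVec, hv, smul_mulVec, one_mulVec, add_smul]
  have hPx : Pα *ᵥ x = ((η + α) / 2) • x := by
    rw [hP, smul_mulVec, ← mulVec_mulVec, hfac2, mulVec_smul, hfac1 x heig]
    rw [smul_smul, smul_smul]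
    congr 1
    field_simp
  -- invertibility of Pα
  have hdet : Pα.det ≠ 0 := by
    rw [Ne, ← Matrix.exists_mulVec_eq_zero_iff]
    rintro ⟨v, hv, hPv⟩
    rw [hP, smul_mulVec, ← mulVec_mulVec] at hPv
    have hc : (1 : ℝ) / (2 * α) ≠ 0 := by positivity
    have hPv' : (A + α • 1) *ᵥ ((α • 1 + γ • (U * Uᵀ)) *ᵥ v) = 0 := by
      have := smul_eq_zero.mp hPv
      tauto
    set w := (α • 1 + γ • (U * Uᵀ)) *ᵥ v with hw
    -- first: w = 0 since A + αI is injective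
    have hw0 : w = 0 := by
      by_contra hw0
      have h1 := hA.dotProduct_mulVec_pos hw0
      rw [star_trivial, hquad] at h1
      have h2 : A *ᵥ w = -(α • w) := by
        have := hPv'
        rw [add_mulVec, smul_mulVec, one_mulVec] at this
        linear_combination (norm := module) this
      rw [h2, dotProduct_neg, dotProduct_smul, smul_eq_mul] at h1
      have := hdp w hw0
      nlinarith
    -- second: v = 0 since αI + γUUᵀ is injective
    have h3 : v ⬝ᵥ w = α * (v ⬝ᵥ v) + γ * ((Uᵀ *ᵥ v) ⬝ᵥ (Uᵀ *ᵥ v)) := by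
      rw [hw, add_mulVec, smul_mulVec, one_mulVec, smul_mulVec,
        dotProduct_add, dotProduct_smul, dotProduct_smul, ← mulVec_mulVec,
        dotProduct_mulVec (A := U)]
      simp [smul_eq_mul, ← Matrix.mulVec_transpose]
    have h4 : v ⬝ᵥ w = 0 := by rw [hw0, dotProduct_zero]
    have h5 : 0 ≤ (Uᵀ *ᵥ v) ⬝ᵥ (Uᵀ *ᵥ v) :=
      Finset.sum_nonneg fun i _ => mul_self_nonneg _
    have h6 := hdp v hv
    nlinarith
  have hinv : Pα⁻¹ * Pα = 1 := nonsing_inv_mul Pα (isUnit_iff_ne_zero.mpr hdet)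
  have hPix : Pα⁻¹ *ᵥ x = (2 / (η + α)) • x := by
    have : Pα⁻¹ *ᵥ (Pα *ᵥ x) = x := by
      rw [mulVec_mulVec, hinv, one_mulVec]
    rw [hPx, mulVec_smul] at this
    have h7 : (2 / (η + α)) • (((η + α) / 2) • (Pα⁻¹ *ᵥ x)) = (2 / (η + α)) • x := by
      rw [this]
    rw [smul_smul] at h7
    have h8 : 2 / (η + α) * ((η + α) / 2) = 1 := by field_simp
    rwa [h8, one_smul] at h7
  rw [← mulVec_mulVec, hBx, mulVec_smul, hPix, smul_smul]
  congr 1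
  ring
end
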